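/- arXiv:math/9803162 — 2 statements merged into one kernel-verified Lean document; each statement's English description precedes it below -/
import Mathlib

section
/- The Laplace functional of the Poisson point process: for the Poisson process π_σ with intensity σ and any measurable f: X → ℝ with f ≤ 0 and e^f − 1 ∈ L¹(X;σ), one has ∫ exp(⟨f,γ⟩) π_σ(dγ) = exp(∫_X (e^f − 1) dσ). -/
open MeasureTheory ProbabilityTheory Filter
open scoped ENNReal Topology

noncomputable def nexp (t : ℝ≥0∞) : ℝ≥0∞ :=
  if t = ⊤ then 0 else ENNReal.ofReal (Real.exp (-t.toReal))

lemma nexp_top : nexp ⊤ = 0 := if_pos rfl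

lemma nexp_of_ne {t : ℝ≥0∞} (h : t ≠ ⊤) :
    nexp t = ENNReal.ofReal (Real.exp (-t.toReal)) := if_neg h

lemma nexp_zero : nexp 0 = 1 := by simp [nexp]

lemma nexp_le_one (t : ℝ≥0∞) : nexp t ≤ 1 := by
  unfold nexp; split
  · exact zero_le_one
  · rw [← ENNReal.ofReal_one]
    exact ENNReal.ofReal_le_ofReal (Real.exp_le_one_iff.2 (neg_nonpos.2 ENNReal.toReal_nonneg))

lemma nexp_ne_top (t : ℝ≥0∞) : nexp t ≠ ⊤ :=
  ((nexp_le_one t).trans_lt ENNReal.one_lt_top).ne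

lemma nexp_add (a b : ℝ≥0∞) : nexp (a + b) = nexp a * nexp b := by
  rcases eq_or_ne a ⊤ with rfl | ha
  · simp [nexp_top, top_add]
  rcases eq_or_ne b ⊤ with rfl | hb
  · simp [nexp_top, add_top]
  rw [nexp_of_ne (by simp [ha, hb, ENNReal.add_ne_top] : a + b ≠ ⊤), nexp_of_ne ha,
    nexp_of_ne hb, ENNReal.toReal_add ha hb, neg_add, Real.exp_add,
    ENNReal.ofReal_mul (Real.exp_nonneg _)]

lemma nexp_anti : Antitone nexp := by
  intro a b h
  rcases eq_or_ne b ⊤ with rfl | hb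
  · simp [nexp_top]
  · have ha : a ≠ ⊤ := ne_top_of_le_ne_top hb h
    rw [nexp_of_ne ha, nexp_of_ne hb]
    exact ENNReal.ofReal_le_ofReal
      (Real.exp_le_exp.2 (neg_le_neg (ENNReal.toReal_mono hb h)))

lemma nexp_continuous : Continuous nexp := by
  rw [continuous_iff_continuousAt]
  intro a
  rcases eq_or_ne a ⊤ with rfl | ha
  · rw [ContinuousAt, nexp_top, ENNReal.tendsto_nhds_zero]
    intro ε hε
    rcases le_or_gt 1 ε with hε1 | hε1
    · exact Eventually.of_forall fun t => (nexp_le_one t).trans hε1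
    · have hεt : ε ≠ ⊤ := hε1.ne_top
      have hε0 : (0 : ℝ) < ε.toReal := ENNReal.toReal_pos hε.ne' hεt
      set M : ℝ := -Real.log ε.toReal with hM
      have hMpos : 0 < M := by
        rw [hM]
        have : Real.log ε.toReal < 0 := Real.log_neg hε0 (by
          have := (ENNReal.toReal_lt_toReal hεt ENNReal.one_ne_top).2 hε1
          simpa using this)
        linarith
      have hmem : Set.Ioi (ENNReal.ofReal M) ∈ 𝓝 (⊤ : ℝ≥0∞) :=
        Ioi_mem_nhds (lt_top_iff_ne_top.2 ENNReal.ofReal_ne_top)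
      filter_upwards [hmem] with t ht
      have h1 : nexp t ≤ nexp (ENNReal.ofReal M) := nexp_anti ht.le
      have h2 : nexp (ENNReal.ofReal M) = ε := by
        rw [nexp_of_ne ENNReal.ofReal_ne_top, ENNReal.toReal_ofReal hMpos.le, hM, neg_neg,
          Real.exp_log hε0, ENNReal.ofReal_toReal hεt]
      exact h1.trans_eq h2
  · have h1 : ∀ᶠ t in 𝓝 a, ENNReal.ofReal (Real.exp (-t.toReal)) = nexp t := by
      filter_upwards [Iio_mem_nhds (lt_top_iff_ne_top.2 ha)] with t ht
      exact (nexp_of_ne ht.ne).symm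
    have h2 : Tendsto (fun t : ℝ≥0∞ => ENNReal.ofReal (Real.exp (-t.toReal))) (𝓝 a)
        (𝓝 (ENNReal.ofReal (Real.exp (-a.toReal)))) := by
      exact (ENNReal.continuous_ofReal.tendsto _).comp
        ((Real.continuous_exp.tendsto _).comp
          ((continuous_neg.tendsto _).comp (ENNReal.tendsto_toReal ha)))
    rw [ContinuousAt, nexp_of_ne ha]
    exact h2.congr' h1

lemma nexp_measurable : Measurable nexp := nexp_continuous.measurable

lemma nexp_sum {ι : Type*} (t : Finset ι) (f : ι → ℝ≥0∞) :
    nexp (∑ i ∈ t, f i) = ∏ i ∈ t, nexp (f i) := by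
  classical
  induction t using Finset.cons_induction with
  | empty => simp [nexp_zero]
  | cons i s hi ih => rw [Finset.sum_cons, Finset.prod_cons, nexp_add, ih]

/-- `π` is a Poisson point process with intensity `σ`: a probability measure on the
space of (configuration) measures on `X` such that for every measurable set `A` of finite
intensity the number of points in `A` is Poisson distributed with mean `σ A`, and the
counts on pairwise disjoint measurable sets are independent. -/
def IsPoissonPP {X : Type*} [MeasurableSpace X] (σ : Measure X)
    (π : Measure (Measure X)) : Prop :=
  IsProbabilityMeasure π ∧
  (∀ A : Set X, MeasurableSet A → σ A ≠ ⊤ → ∀ k : ℕ,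
      π {γ : Measure X | γ A = k} =
        ENNReal.ofReal (Real.exp (-(σ A).toReal) * (σ A).toReal ^ k / (Nat.factorial k))) ∧
  (∀ (ι : Type) (A : ι → Set X), (∀ i, MeasurableSet (A i)) →
      Pairwise (Function.onFun Disjoint A) →
      iIndepFun (fun i (γ : Measure X) => γ (A i)) π)

lemma lintegral_finset_prod_of_indep {Ω : Type*} [MeasurableSpace Ω] {μ : Measure Ω}
    [IsProbabilityMeasure μ] {ι : Type*} {Y : ι → Ω → ℝ≥0∞} (hY : ∀ i, Measurable (Y i))
    (hind : iIndepFun Y μ) (t : Finset ι) :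
    ∫⁻ ω, ∏ i ∈ t, Y i ω ∂μ = ∏ i ∈ t, ∫⁻ ω, Y i ω ∂μ := by
  classical
  induction t using Finset.cons_induction with
  | empty => simp
  | cons i s hi ih =>
    simp only [Finset.prod_cons]
    have h1 : IndepFun (∏ j ∈ s, Y j) (Y i) μ :=
      hind.indepFun_finsetProd_of_notMem hY hi
    have h2 : IndepFun (fun ω => ∏ j ∈ s, Y j ω) (Y i) μ := by
      have : (fun ω => ∏ j ∈ s, Y j ω) = ∏ j ∈ s, Y j := by
        funext ω; simp [Finset.prod_apply]
      rw [this]; exact h1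
    have h3 := lintegral_mul_eq_lintegral_mul_lintegral_of_indepFun''
      (Finset.measurable_prod s (fun j _ => hY j)).aemeasurable (hY i).aemeasurable h2
    calc ∫⁻ ω, Y i ω * ∏ j ∈ s, Y j ω ∂μ
        = ∫⁻ ω, (∏ j ∈ s, Y j ω) * Y i ω ∂μ := by simp_rw [mul_comm]
      _ = (∫⁻ ω, ∏ j ∈ s, Y j ω ∂μ) * ∫⁻ ω, Y i ω ∂μ := h3
      _ = (∏ j ∈ s, ∫⁻ ω, Y j ω ∂μ) * ∫⁻ ω, Y i ω ∂μ := by rw [ih]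
      _ = (∫⁻ ω, Y i ω ∂μ) * ∏ j ∈ s, ∫⁻ ω, Y j ω ∂μ := mul_comm _ _

lemma poisson_count_lintegral {X : Type*} [MeasurableSpace X] {σ : Measure X}
    {π : Measure (Measure X)} (hπ : IsPoissonPP σ π) {A : Set X}
    (hA : MeasurableSet A) (hAσ : σ A ≠ ⊤) {c : ℝ≥0∞} (hc : c ≠ ⊤) :
    ∫⁻ γ, nexp (c * γ A) ∂π = nexp ((1 - nexp c) * σ A) := by
  haveI := hπ.1
  set lam : ℝ := (σ A).toReal with hlam
  have hlam0 : 0 ≤ lam := ENNReal.toReal_nonneg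
  set r : ℝ := Real.exp (-c.toReal) with hr
  have hr0 : 0 < r := Real.exp_pos _
  have hr1 : r ≤ 1 := Real.exp_le_one_iff.2 (neg_nonpos.2 ENNReal.toReal_nonneg)
  set S : ℕ → Set (Measure X) := fun k => {γ : Measure X | γ A = k} with hS
  have hSm : ∀ k, MeasurableSet (S k) := fun k =>
    Measure.measurable_coe hA (measurableSet_singleton _)
  have hSd : Pairwise (Function.onFun Disjoint S) := by
    intro i j hij
    refine Set.disjoint_left.2 fun γ h1 h2 => hij ?_
    exact_mod_cast (h1.symm.trans h2 : ((i : ℝ≥0∞)) = j)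
  -- the exponential series
  have hsummable : ∀ x : ℝ, Summable (fun k : ℕ => x ^ k / (Nat.factorial k) : ℕ → ℝ) :=
    fun x => Real.summable_pow_div_factorial x
  have hexp_tsum : ∀ x : ℝ, (∑' k : ℕ, x ^ k / (Nat.factorial k)) = Real.exp x := by
    intro x
    rw [Real.exp_eq_exp_ℝ, NormedSpace.exp_eq_tsum_div]
  have hsum1 : (∑' k : ℕ, π (S k)) = 1 := by
    have h1 : ∀ k : ℕ, π (S k) =
        ENNReal.ofReal (Real.exp (-lam) * (lam ^ k / (Nat.factorial k))) := by
      intro k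
      rw [hπ.2.1 A hA hAσ k, mul_div_assoc]
    simp_rw [h1]
    rw [← ENNReal.ofReal_tsum_of_nonneg
      (fun k => by positivity) ((hsummable lam).mul_left _)]
    rw [tsum_mul_left, hexp_tsum, ← Real.exp_add]
    simp
  have hUm : MeasurableSet (⋃ k, S k) := MeasurableSet.iUnion hSm
  have hcompl : π (⋃ k, S k)ᶜ = 0 := by
    have hU : π (⋃ k, S k) = 1 := by
      rw [measure_iUnion hSd hSm, hsum1]
    rw [measure_compl hUm (by simp [hU]), hU, measure_univ, tsub_self]
  have key : ∫⁻ γ, nexp (c * γ A) ∂π = ∑' k : ℕ, nexp (c * k) * π (S k) := by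
    rw [← lintegral_add_compl (fun γ => nexp (c * γ A)) hUm,
      setLIntegral_measure_zero _ _ hcompl, add_zero,
      lintegral_iUnion hSm hSd]
    congr 1
    funext k
    rw [show ∫⁻ γ in S k, nexp (c * γ A) ∂π = ∫⁻ _ in S k, nexp (c * k) ∂π from
      setLIntegral_congr_fun (hSm k) (fun γ hγ => by rw [hγ]),
      setLIntegral_const]
  rw [key]
  have hterm : ∀ k : ℕ, nexp (c * k) * π (S k) =
      ENNReal.ofReal (Real.exp (-lam) * ((lam * r) ^ k / (Nat.factorial k))) := by
    intro k
    have hck : c * k ≠ ⊤ := ENNReal.mul_ne_top hc (ENNReal.natCast_ne_top k)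
    rw [nexp_of_ne hck, hπ.2.1 A hA hAσ k, ← ENNReal.ofReal_mul (Real.exp_nonneg _)]
    congr 1
    rw [ENNReal.toReal_mul, ENNReal.toReal_natCast]
    have hrk : r ^ k = Real.exp (-(c.toReal * k)) := by
      rw [hr, ← Real.exp_nat_mul]
      congr 1; ring
    rw [mul_pow, hrk, ← hlam]
    ring
  simp_rw [hterm]
  rw [← ENNReal.ofReal_tsum_of_nonneg (fun k => by positivity)
    ((hsummable (lam * r)).mul_left _), tsum_mul_left, hexp_tsum, ← Real.exp_add]
  have h1c : (1 : ℝ≥0∞) - nexp c = ENNReal.ofReal (1 - r) := by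
    rw [nexp_of_ne hc, ← hr, ENNReal.ofReal_sub _ hr0.le, ENNReal.ofReal_one]
  have harg : (1 - nexp c) * σ A ≠ ⊤ := by
    rw [h1c]
    exact ENNReal.mul_ne_top ENNReal.ofReal_ne_top hAσ
  rw [nexp_of_ne harg, h1c, ENNReal.toReal_mul, ENNReal.toReal_ofReal (by linarith), ← hlam]
  congr 1
  ring

lemma poisson_simple {X : Type*} [MeasurableSpace X] {σ : Measure X}
    {π : Measure (Measure X)} (hπ : IsPoissonPP σ π) (s : SimpleFunc X ℝ≥0∞)
    (hfin : ∀ x, s x ≠ ⊤) (hσfin : ∀ c : ℝ≥0∞, c ≠ 0 → σ (⇑s ⁻¹' {c}) ≠ ⊤) :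
    ∫⁻ γ, nexp (∫⁻ x, s x ∂γ) ∂π = nexp (∫⁻ x, (1 - nexp (s x)) ∂σ) := by
  haveI := hπ.1
  set Y : ℝ≥0∞ → Measure X → ℝ≥0∞ := fun c γ => nexp (c * γ (⇑s ⁻¹' {c})) with hY
  have hfibm : ∀ c : ℝ≥0∞, MeasurableSet (⇑s ⁻¹' {c}) := fun c => s.measurableSet_fiber c
  have hdisj : Pairwise (Function.onFun Disjoint fun c : ℝ≥0∞ => ⇑s ⁻¹' {c}) := by
    intro c d hcd
    exact Set.disjoint_left.2 fun x h1 h2 => hcd ((h1 : s x = c).symm.trans h2)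
  have hind0 := hπ.2.2 ℝ≥0∞ (fun c => ⇑s ⁻¹' {c}) hfibm hdisj
  have hindY : iIndepFun Y π := by
    exact hind0.comp (fun c t => nexp (c * t))
      (fun c => nexp_measurable.comp (measurable_id.const_mul c))
  have hYm : ∀ c : ℝ≥0∞, Measurable (Y c) := fun c =>
    nexp_measurable.comp ((Measure.measurable_coe (hfibm c)).const_mul c)
  have step1 : ∀ γ : Measure X, nexp (∫⁻ x, s x ∂γ) = ∏ c ∈ s.range, Y c γ := by
    intro γ
    rw [s.lintegral_eq_lintegral γ]
    rw [SimpleFunc.lintegral, nexp_sum]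
  have step2 : ∀ c ∈ s.range, ∫⁻ γ, Y c γ ∂π = nexp ((1 - nexp c) * σ (⇑s ⁻¹' {c})) := by
    intro c hc
    rcases eq_or_ne c 0 with rfl | hc0
    · simp only [hY, zero_mul, nexp_zero]
      rw [lintegral_one, measure_univ]
      rw [tsub_self, zero_mul, nexp_zero]
    · have hcne : c ≠ ⊤ := by
        obtain ⟨x, hx⟩ := SimpleFunc.mem_range.1 hc
        exact hx ▸ hfin x
      exact poisson_count_lintegral hπ (hfibm c) (hσfin c hc0) hcne
  calc ∫⁻ γ, nexp (∫⁻ x, s x ∂γ) ∂π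
      = ∫⁻ γ, ∏ c ∈ s.range, Y c γ ∂π := by simp_rw [step1]
    _ = ∏ c ∈ s.range, ∫⁻ γ, Y c γ ∂π :=
        lintegral_finset_prod_of_indep hYm hindY s.range
    _ = ∏ c ∈ s.range, nexp ((1 - nexp c) * σ (⇑s ⁻¹' {c})) := Finset.prod_congr rfl step2
    _ = nexp (∑ c ∈ s.range, (1 - nexp c) * σ (⇑s ⁻¹' {c})) := (nexp_sum _ _).symm
    _ = nexp (∫⁻ x, (1 - nexp (s x)) ∂σ) := by
        congr 1
        have h1 : (∫⁻ x, (1 - nexp (s x)) ∂σ) = ∫⁻ x, (s.map fun c => 1 - nexp c) x ∂σ := by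
          simp [SimpleFunc.coe_map, Function.comp]
        rw [h1, SimpleFunc.lintegral_eq_lintegral, SimpleFunc.map_lintegral]

lemma poisson_main {X : Type*} [MeasurableSpace X] {σ : Measure X} [SigmaFinite σ]
    {π : Measure (Measure X)} (hπ : IsPoissonPP σ π)
    {g : X → ℝ≥0∞} (hg : Measurable g) (hgfin : ∀ x, g x ≠ ⊤) :
    ∫⁻ γ, nexp (∫⁻ x, g x ∂γ) ∂π = nexp (∫⁻ x, (1 - nexp (g x)) ∂σ) := by
  haveI := hπ.1
  classical
  set s : ℕ → SimpleFunc X ℝ≥0∞ :=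
    fun n => (SimpleFunc.eapprox g n).restrict (spanningSets σ n) with hs
  have hsapp : ∀ n x, s n x = (spanningSets σ n).indicator (SimpleFunc.eapprox g n) x :=
    fun n x => SimpleFunc.restrict_apply _ (measurableSet_spanningSets σ n) x
  have hmono : ∀ x, Monotone fun n => s n x := by
    intro x n m hnm
    show s n x ≤ s m x
    rw [hsapp, hsapp]
    by_cases hx : x ∈ spanningSets σ n
    · rw [Set.indicator_of_mem hx, Set.indicator_of_mem (monotone_spanningSets σ hnm hx)]
      exact SimpleFunc.monotone_eapprox g hnm x
    · rw [Set.indicator_of_notMem hx]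
      exact zero_le
  have hle : ∀ n x, s n x ≤ g x := by
    intro n x
    rw [hsapp]
    refine le_trans (Set.indicator_le_self _ _ x) ?_
    exact (le_iSup (fun n => SimpleFunc.eapprox g n x) n).trans
      (SimpleFunc.iSup_eapprox_apply hg x).le
  have hsup : ∀ x, ⨆ n, s n x = g x := by
    intro x
    obtain ⟨m, hm⟩ : ∃ m, x ∈ spanningSets σ m := by
      have : x ∈ ⋃ n, spanningSets σ n := by rw [iUnion_spanningSets]; trivial
      exact Set.mem_iUnion.1 this
    refine le_antisymm (iSup_le fun n => hle n x) ?_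
    rw [← SimpleFunc.iSup_eapprox_apply hg x]
    refine iSup_le fun n => le_iSup_of_le (max n m) ?_
    rw [hsapp]
    rw [Set.indicator_of_mem (monotone_spanningSets σ (le_max_right n m) hm)]
    exact SimpleFunc.monotone_eapprox g (le_max_left n m) x
  have hkey : ∀ n, ∫⁻ γ, nexp (∫⁻ x, s n x ∂γ) ∂π = nexp (∫⁻ x, (1 - nexp (s n x)) ∂σ) := by
    intro n
    refine poisson_simple hπ (s n) (fun x => ?_) (fun c hc0 => ?_)
    · rw [hsapp]
      by_cases hx : x ∈ spanningSets σ n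
      · rw [Set.indicator_of_mem hx]
        exact (SimpleFunc.eapprox_lt_top g n x).ne
      · rw [Set.indicator_of_notMem hx]
        exact ENNReal.zero_ne_top
    · have hsub : ⇑(s n) ⁻¹' {c} ⊆ spanningSets σ n := by
        intro x hx
        by_contra hxn
        apply hc0
        have := hsapp n x
        rw [Set.indicator_of_notMem hxn] at this
        rw [← (hx : s n x = c), this]
      exact ((measure_mono hsub).trans_lt (measure_spanningSets_lt_top σ n)).ne
  have hLHS : Tendsto (fun n => ∫⁻ γ, nexp (∫⁻ x, s n x ∂γ) ∂π) atTop
      (𝓝 (∫⁻ γ, nexp (∫⁻ x, g x ∂γ) ∂π)) := by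
    refine tendsto_lintegral_of_dominated_convergence (fun _ => 1)
      (fun n => nexp_measurable.comp (Measure.measurable_lintegral (s n).measurable))
      (fun n => Eventually.of_forall fun γ => nexp_le_one _) (by simp) ?_
    refine Eventually.of_forall fun γ => ?_
    have h1 : Tendsto (fun n => ∫⁻ x, s n x ∂γ) atTop (𝓝 (∫⁻ x, g x ∂γ)) := by
      have hm : Monotone fun n => ∫⁻ x, s n x ∂γ :=
        fun n m hnm => lintegral_mono fun x => hmono x hnm
      have heq : (⨆ n, ∫⁻ x, s n x ∂γ) = ∫⁻ x, g x ∂γ := by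
        rw [← lintegral_iSup (fun n => (s n).measurable) (fun n m hnm x => hmono x hnm)]
        congr 1
        funext x
        exact hsup x
      exact heq ▸ tendsto_atTop_iSup hm
    exact (nexp_continuous.tendsto _).comp h1
  have hRHS : Tendsto (fun n => nexp (∫⁻ x, (1 - nexp (s n x)) ∂σ)) atTop
      (𝓝 (nexp (∫⁻ x, (1 - nexp (g x)) ∂σ))) := by
    refine (nexp_continuous.tendsto _).comp ?_
    have hm : Monotone fun n => ∫⁻ x, (1 - nexp (s n x)) ∂σ := by
      intro n m hnm
      exact lintegral_mono fun x => tsub_le_tsub_left (nexp_anti (hmono x hnm)) 1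
    have heq : (⨆ n, ∫⁻ x, (1 - nexp (s n x)) ∂σ) = ∫⁻ x, (1 - nexp (g x)) ∂σ := by
      rw [← lintegral_iSup (f := fun n x => 1 - nexp (s n x))
        (fun n => measurable_const.sub (nexp_measurable.comp (s n).measurable))
        (fun n m hnm x => tsub_le_tsub_left (nexp_anti (hmono x hnm)) 1)]
      congr 1
      funext x
      have h2 : Tendsto (fun n => (1:ℝ≥0∞) - nexp (s n x)) atTop (𝓝 (1 - nexp (g x))) := by
        refine (ENNReal.continuous_sub_left ENNReal.one_ne_top).tendsto _ |>.comp ?_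
        exact (nexp_continuous.tendsto _).comp (hsup x ▸ tendsto_atTop_iSup (hmono x))
      have h3 : Monotone fun n => (1:ℝ≥0∞) - nexp (s n x) :=
        fun n m hnm => tsub_le_tsub_left (nexp_anti (hmono x hnm)) 1
      exact tendsto_nhds_unique (tendsto_atTop_iSup h3) h2
    exact heq ▸ tendsto_atTop_iSup hm
  exact tendsto_nhds_unique (by simpa only [hkey] using hLHS) hRHS

/-- Laplace functional of the Poisson point process: for measurable `f ≤ 0` with
`e^f − 1 ∈ L¹(X;σ)`, one has `∫ exp(⟨f,γ⟩) π(dγ) = exp (∫ (e^f − 1) dσ)`. -/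
theorem poisson_laplace_functional
    {X : Type*} [MeasurableSpace X] (σ : Measure X) [SigmaFinite σ]
    (π : Measure (Measure X)) (hπ : IsPoissonPP σ π)
    (f : X → ℝ) (hfm : Measurable f) (hfnp : ∀ x, f x ≤ 0)
    (hfint : Integrable (fun x => Real.exp (f x) - 1) σ) :
    ∫ γ : Measure X, Real.exp (∫ x, f x ∂γ) ∂π
      = Real.exp (∫ x, (Real.exp (f x) - 1) ∂σ) := by
  haveI := hπ.1
  classical
  set g : X → ℝ≥0∞ := fun x => ENNReal.ofReal (-f x) with hgdef
  have hgm : Measurable g := hfm.neg.ennreal_ofReal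
  have hgfin : ∀ x, g x ≠ ⊤ := fun x => ENNReal.ofReal_ne_top
  have hnexpg : ∀ x, nexp (g x) = ENNReal.ofReal (Real.exp (f x)) := by
    intro x
    rw [nexp_of_ne (hgfin x)]
    simp only [hgdef]
    rw [ENNReal.toReal_ofReal (neg_nonneg.2 (hfnp x)), neg_neg]
  have hone : ∀ x, (1 : ℝ≥0∞) - nexp (g x) = ENNReal.ofReal (1 - Real.exp (f x)) := by
    intro x
    rw [hnexpg x, ENNReal.ofReal_sub _ (Real.exp_nonneg _), ENNReal.ofReal_one]
  have hint1 : Integrable (fun x => 1 - Real.exp (f x)) σ :=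
    hfint.neg.congr (Eventually.of_forall fun x => by simp only [Pi.neg_apply]; ring)
  have hnn : ∀ x, 0 ≤ 1 - Real.exp (f x) := fun x =>
    sub_nonneg.2 (Real.exp_le_one_iff.2 (hfnp x))
  set I0 : ℝ := ∫ x, (1 - Real.exp (f x)) ∂σ with hI0def
  have hI0 : 0 ≤ I0 := integral_nonneg hnn
  have hlin : ∫⁻ x, (1 - nexp (g x)) ∂σ = ENNReal.ofReal I0 := by
    simp_rw [hone]
    rw [← ofReal_integral_eq_lintegral_ofReal hint1 (Eventually.of_forall hnn)]
  have hmain : ∫⁻ γ, nexp (∫⁻ x, g x ∂γ) ∂π = ENNReal.ofReal (Real.exp (-I0)) := by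
    rw [poisson_main hπ hgm hgfin, hlin, nexp_of_ne ENNReal.ofReal_ne_top,
      ENNReal.toReal_ofReal hI0]
  set I : Measure X → ℝ≥0∞ := fun γ => ∫⁻ x, g x ∂γ with hIdef
  have hImeas : Measurable I := Measure.measurable_lintegral hgm
  -- a.e. finiteness of I
  have haefin : ∀ᵐ γ ∂π, I γ ≠ ⊤ := by
    set c : ℕ → ℝ≥0∞ := fun n => ((n : ℝ≥0∞) + 1)⁻¹ with hcdef
    have hc0 : ∀ n, c n ≠ 0 := by
      intro n
      simp [hcdef, ENNReal.inv_ne_zero, ENNReal.add_ne_top]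
    have hcne : ∀ n, c n ≠ ⊤ := by
      intro n
      simp [hcdef]
    have hc1 : ∀ n, c n ≤ 1 := by
      intro n
      rw [hcdef]
      simp only []
      rw [ENNReal.inv_le_one]
      exact le_add_self
    have hctend : Tendsto c atTop (𝓝 0) := by
      have h1 : ∀ n : ℕ, c n ≤ (n : ℝ≥0∞)⁻¹ := fun n =>
        ENNReal.inv_le_inv.2 le_self_add
      exact tendsto_of_tendsto_of_tendsto_of_le_of_le tendsto_const_nhds
        ENNReal.tendsto_inv_nat_nhds_zero (fun n => zero_le) h1
    have hscal : ∀ n, ∫⁻ γ, nexp (c n * I γ) ∂π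
        = nexp (∫⁻ x, (1 - nexp (c n * g x)) ∂σ) := by
      intro n
      have h1 := poisson_main hπ (g := fun x => c n * g x) (hgm.const_mul _)
        (fun x => ENNReal.mul_ne_top (hcne n) (hgfin x))
      simpa only [lintegral_const_mul _ hgm] using h1
    have hRtend : Tendsto (fun n => ∫⁻ x, (1 - nexp (c n * g x)) ∂σ) atTop (𝓝 0) := by
      have h0 : (0 : ℝ≥0∞) = ∫⁻ _ : X, 0 ∂σ := by simp
      rw [h0]
      refine tendsto_lintegral_of_dominated_convergence (fun x => 1 - nexp (g x))
        (fun n => measurable_const.sub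
          (nexp_measurable.comp (hgm.const_mul _)))
        (fun n => Eventually.of_forall fun x =>
          tsub_le_tsub_left (nexp_anti (mul_le_of_le_one_left zero_le (hc1 n))) 1)
        (by rw [hlin]; exact ENNReal.ofReal_ne_top) ?_
      refine Eventually.of_forall fun x => ?_
      have h1 : Tendsto (fun n => c n * g x) atTop (𝓝 0) := by
        have := ENNReal.Tendsto.mul_const hctend (Or.inr (hgfin x))
        simpa using this
      have h2 : Tendsto (fun n => nexp (c n * g x)) atTop (𝓝 1) := by
        have := (nexp_continuous.tendsto 0).comp h1
        rwa [nexp_zero] at this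
      have h3 := ((ENNReal.continuous_sub_left ENNReal.one_ne_top).tendsto 1).comp h2
      simpa [Function.comp_def] using h3
    have hLtend : Tendsto (fun n => ∫⁻ γ, nexp (c n * I γ) ∂π) atTop (𝓝 1) := by
      simp_rw [hscal]
      have := (nexp_continuous.tendsto 0).comp hRtend
      rwa [nexp_zero] at this
    have hsetm : MeasurableSet {γ : Measure X | I γ ≠ ⊤} :=
      (hImeas (measurableSet_singleton ⊤)).compl
    have hbound : ∀ n, ∫⁻ γ, nexp (c n * I γ) ∂π ≤ π {γ | I γ ≠ ⊤} := by
      intro n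
      have h1 : ∀ γ : Measure X, nexp (c n * I γ) ≤
          {γ : Measure X | I γ ≠ ⊤}.indicator (fun _ => 1) γ := by
        intro γ
        by_cases hγ : I γ = ⊤
        · have hmem : γ ∉ {γ : Measure X | I γ ≠ ⊤} := by simp [hγ]
          rw [Set.indicator_of_notMem hmem, hγ, ENNReal.mul_top (hc0 n), nexp_top]
        · have hmem : γ ∈ {γ : Measure X | I γ ≠ ⊤} := hγ
          rw [Set.indicator_of_mem hmem]
          exact nexp_le_one _
      calc ∫⁻ γ, nexp (c n * I γ) ∂π
          ≤ ∫⁻ γ, {γ : Measure X | I γ ≠ ⊤}.indicator (fun _ => 1) γ ∂π :=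
            lintegral_mono h1
        _ = π {γ | I γ ≠ ⊤} := by rw [lintegral_indicator hsetm]; simp
    have hge : (1 : ℝ≥0∞) ≤ π {γ | I γ ≠ ⊤} :=
      le_of_tendsto hLtend (Eventually.of_forall hbound)
    have heq1 : π {γ | I γ ≠ ⊤} = 1 :=
      le_antisymm (le_trans (measure_mono (Set.subset_univ _)) (by simp)) hge
    rw [ae_iff]
    have : {γ : Measure X | ¬ I γ ≠ ⊤} = {γ : Measure X | I γ ≠ ⊤}ᶜ := by
      ext γ; simp
    rw [this, measure_compl hsetm (by simp [heq1]), heq1, measure_univ, tsub_self]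
  -- convert Bochner integrals
  have hcongr : ∀ᵐ γ ∂π, Real.exp (∫ x, f x ∂γ) = (nexp (I γ)).toReal := by
    filter_upwards [haefin] with γ hγ
    have hnorm : ∀ x, (‖f x‖₊ : ℝ≥0∞) = g x := by
      intro x
      rw [← enorm_eq_nnnorm, ← ofReal_norm, Real.norm_eq_abs, abs_of_nonpos (hfnp x)]
    have hfintγ : Integrable f γ := by
      refine ⟨hfm.aestronglyMeasurable, ?_⟩
      show ∫⁻ x, (‖f x‖₊ : ℝ≥0∞) ∂γ < ⊤
      simp_rw [hnorm]
      exact lt_top_iff_ne_top.2 hγ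
    have hnegint : ∫ x, -f x ∂γ = (I γ).toReal := by
      rw [integral_eq_lintegral_of_nonneg_ae
        (Eventually.of_forall fun x => neg_nonneg.2 (hfnp x)) hfm.neg.aestronglyMeasurable]
    have h1 : ∫ x, f x ∂γ = -(I γ).toReal := by
      rw [← hnegint, ← integral_neg]
      simp
    rw [h1, nexp_of_ne hγ, ENNReal.toReal_ofReal (Real.exp_nonneg _)]
  calc ∫ γ : Measure X, Real.exp (∫ x, f x ∂γ) ∂π
      = ∫ γ, (nexp (I γ)).toReal ∂π := integral_congr_ae hcongr
    _ = (∫⁻ γ, nexp (I γ) ∂π).toReal :=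
        integral_toReal ((nexp_measurable.comp hImeas).aemeasurable)
          (Eventually.of_forall fun γ => (nexp_le_one _).trans_lt ENNReal.one_lt_top)
    _ = (ENNReal.ofReal (Real.exp (-I0))).toReal := by rw [hmain]
    _ = Real.exp (-I0) := ENNReal.toReal_ofReal (Real.exp_nonneg _)
    _ = Real.exp (∫ x, (Real.exp (f x) - 1) ∂σ) := by
        congr 1
        rw [hI0def, ← integral_neg]
        congr 1
        funext x
        ring
end

section
/- Let K be a convex set of probability measures on a measurable space and P a set of probability measures such that K ∩ P is convex and P has the property: whenever μ ∈ P and ν ≤ Cμ for a constant C then ν ∈ P (P is solid under bounded densities). Then the extreme points satisfy ex(K ∩ P) = (ex K) ∩ P. -/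
open MeasureTheory
open scoped ENNReal

/-- A set `S` of measures is convex (under convex combinations of measures). -/
def MeasureConvex {Ω : Type*} [MeasurableSpace Ω] (S : Set (Measure Ω)) : Prop :=
  ∀ μ₁ ∈ S, ∀ μ₂ ∈ S, ∀ t : ℝ≥0∞, 0 < t → t < 1 → t • μ₁ + (1 - t) • μ₂ ∈ S

/-- `μ` is an extreme point of the set `S` of (probability) measures. -/
def MeasureExtremePoint {Ω : Type*} [MeasurableSpace Ω] (S : Set (Measure Ω))
    (μ : Measure Ω) : Prop :=
  μ ∈ S ∧ ∀ μ₁ ∈ S, ∀ μ₂ ∈ S, ∀ t : ℝ≥0∞, 0 < t → t < 1 →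
    μ = t • μ₁ + (1 - t) • μ₂ → μ₁ = μ ∧ μ₂ = μ

private lemma smul_part_le {Ω : Type*} [MeasurableSpace Ω]
    (μ μ₁ μ₂ : Measure Ω) (t : ℝ≥0∞) (ht : t ≠ 0) (ht' : t ≠ ⊤)
    (h : μ = t • μ₁ + (1 - t) • μ₂) : μ₁ ≤ t⁻¹ • μ := by
  intro s
  have h1 : t * μ₁ s ≤ μ s := by
    rw [h]
    simp only [Measure.coe_add, Pi.add_apply, Measure.smul_apply, smul_eq_mul]
    exact le_add_right le_rfl
  calc μ₁ s = t⁻¹ * (t * μ₁ s) := by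
        rw [← mul_assoc, ENNReal.inv_mul_cancel ht ht', one_mul]
    _ ≤ t⁻¹ * μ s := mul_le_mul_right h1 _
    _ = (t⁻¹ • μ) s := by simp

/-- For a convex set `K` of probability measures and a set `P` of probability measures such
that `K ∩ P` is convex and `P` is solid under bounded densities (`μ ∈ P`, `ν ≤ C·μ` imply
`ν ∈ P`), the extreme points satisfy `ex (K ∩ P) = (ex K) ∩ P`. -/
theorem extremePoints_inter_solid
    {Ω : Type*} [MeasurableSpace Ω] (K P : Set (Measure Ω))
    (hKprob : ∀ μ ∈ K, IsProbabilityMeasure μ)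
    (hPprob : ∀ μ ∈ P, IsProbabilityMeasure μ)
    (hKconv : MeasureConvex K)
    (hKPconv : MeasureConvex (K ∩ P))
    (hPsolid : ∀ μ ∈ P, ∀ ν : Measure Ω, IsProbabilityMeasure ν →
      (∃ C : ℝ≥0∞, C ≠ ⊤ ∧ ν ≤ C • μ) → ν ∈ P) :
    {μ | MeasureExtremePoint (K ∩ P) μ} = {μ | MeasureExtremePoint K μ} ∩ P := by
  ext μ
  constructor
  · rintro ⟨⟨hμK, hμP⟩, hext⟩
    refine ⟨⟨hμK, ?_⟩, hμP⟩
    intro μ₁ h₁ μ₂ h₂ t ht0 ht1 heq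
    have h1P : μ₁ ∈ P := hPsolid μ hμP μ₁ (hKprob _ h₁)
      ⟨t⁻¹, ENNReal.inv_ne_top.mpr ht0.ne', smul_part_le μ μ₁ μ₂ t ht0.ne' ht1.ne_top heq⟩
    have heq' : μ = (1 - t) • μ₂ + t • μ₁ := by rw [heq, add_comm]
    have h2P : μ₂ ∈ P := hPsolid μ hμP μ₂ (hKprob _ h₂)
      ⟨(1 - t)⁻¹, ENNReal.inv_ne_top.mpr (by simp [tsub_eq_zero_iff_le, not_le, ht1]),
        smul_part_le μ μ₂ μ₁ (1 - t) (by simp [tsub_eq_zero_iff_le, not_le, ht1])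
          (by simp [lt_top_iff_ne_top.mp (lt_of_le_of_lt tsub_le_self ENNReal.one_lt_top)]) (by
          rwa [ENNReal.sub_sub_cancel ENNReal.one_ne_top ht1.le])⟩
    exact hext μ₁ ⟨h₁, h1P⟩ μ₂ ⟨h₂, h2P⟩ t ht0 ht1 heq
  · rintro ⟨⟨hμK, hext⟩, hμP⟩
    refine ⟨⟨hμK, hμP⟩, ?_⟩
    intro μ₁ h₁ μ₂ h₂ t ht0 ht1 heq
    exact hext μ₁ h₁.1 μ₂ h₂.1 t ht0 ht1 heq
end
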